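/- Consider the block problem minimize over d ∈ ℝᴷ of (1/2)‖r - Ad‖₂² + λ₁‖d₋₁‖₁ + λ₂‖Ad‖₂, where A has orthonormal columns (AᵀA = I). Let d̃ be the solution with λ₂ = 0, i.e., of (1/2)‖r - Ad‖₂² + λ₁‖d₋₁‖₁. Then the solution of the full problem is d̂ = max(1 - λ₂/‖Ad̃‖₂, 0)·d̃ (and d̂ = 0 if Ad̃ = 0). -/

import Mathlib

open scoped BigOperators

lemma aux_expand {K : ℕ} (x y : Fin K → ℝ) :
    ∑ j, (x j - y j)^2 = ∑ j, (x j)^2 - 2*(∑ j, x j * y j) + ∑ j, (y j)^2 := by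
  have h : ∀ j ∈ Finset.univ, (x j - y j)^2 = (x j)^2 - 2*(x j * y j) + (y j)^2 :=
    fun j _ => by ring
  rw [Finset.sum_congr rfl h, Finset.sum_add_distrib, Finset.sum_sub_distrib, Finset.mul_sum]

lemma aux_cs {K : ℕ} (x y : Fin K → ℝ) :
    ∑ j, x j * y j ≤ Real.sqrt (∑ j, (x j)^2) * Real.sqrt (∑ j, (y j)^2) := by
  have h := Finset.sum_mul_sq_le_sq_mul_sq Finset.univ x y
  have h2 := Real.sqrt_le_sqrt h
  rw [Real.sqrt_sq_eq_abs, Real.sqrt_mul (by positivity)] at h2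
  exact (le_abs_self _).trans h2



set_option maxHeartbeats 1000000 in
/-- Prox decomposition for the sparse additive waveMesh block problem: if `A` has
orthonormal columns, `d̃` solves the `λ₂ = 0` problem
`(1/2)‖r - Ad‖₂² + λ₁‖d₋₁‖₁`, and `d̂ = max(1 - λ₂/‖Ad̃‖₂, 0) • d̃`
(with `d̂ = 0` if `Ad̃ = 0`), then `d̂` solves the full problem
`(1/2)‖r - Ad‖₂² + λ₁‖d₋₁‖₁ + λ₂‖Ad‖₂`. -/
theorem stmt_16 (n K : ℕ) [NeZero K] (A : Matrix (Fin n) (Fin K) ℝ)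
    (hA : A.transpose * A = 1) (r : Fin n → ℝ)
    (lam₁ lam₂ : ℝ) (hlam₁ : 0 ≤ lam₁) (hlam₂ : 0 ≤ lam₂)
    (pen : (Fin K → ℝ) → ℝ)
    (hpen : ∀ d, pen d = ∑ i ∈ Finset.univ.filter (fun i : Fin K => i ≠ 0), |d i|)
    (G₀ : (Fin K → ℝ) → ℝ)
    (hG₀ : ∀ d, G₀ d = (1 / 2) * ∑ i, (r i - (A.mulVec d) i) ^ 2 + lam₁ * pen d)
    (dtil : Fin K → ℝ) (hdtil : ∀ d, G₀ dtil ≤ G₀ d)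
    (dhat : Fin K → ℝ)
    (hdhat : dhat =
      max (1 - lam₂ / Real.sqrt (∑ i, ((A.mulVec dtil) i) ^ 2)) 0 • dtil) :
    (∀ d : Fin K → ℝ,
      G₀ dhat + lam₂ * Real.sqrt (∑ i, ((A.mulVec dhat) i) ^ 2)
        ≤ G₀ d + lam₂ * Real.sqrt (∑ i, ((A.mulVec d) i) ^ 2)) ∧
    (A.mulVec dtil = 0 → dhat = 0) := by
  classical
  -- norm preservation
  have hAnorm : ∀ d : Fin K → ℝ, ∑ i, ((A.mulVec d) i)^2 = ∑ j, (d j)^2 := by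
    intro d
    have h1 : ∑ i, ((A.mulVec d) i)^2 = dotProduct (A.mulVec d) (A.mulVec d) := by
      simp [dotProduct, sq]
    have h2 : dotProduct (A.mulVec d) (A.mulVec d) = dotProduct d d := by
      rw [Matrix.dotProduct_mulVec, ← Matrix.mulVec_transpose, Matrix.mulVec_mulVec, hA,
        Matrix.one_mulVec]
    rw [h1, h2]; simp [dotProduct, sq]
  obtain ⟨b, hbdef⟩ : ∃ b : Fin K → ℝ, b = A.vecMul r := ⟨_, rfl⟩
  obtain ⟨F, hFdef⟩ : ∃ F : (Fin K → ℝ) → ℝ,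
      F = fun d => (1/2) * ∑ j, (d j - b j)^2 + lam₁ * pen d := ⟨_, rfl⟩
  obtain ⟨C, hCdef⟩ : ∃ C : ℝ,
      C = (1/2) * ∑ i, (r i)^2 - (1/2) * ∑ j, (b j)^2 := ⟨_, rfl⟩
  -- G₀ = C + F
  have hGF : ∀ d, G₀ d = C + F d := by
    intro d
    have hrd : ∑ i, r i * (A.mulVec d) i = ∑ j, b j * d j := by
      rw [hbdef]; exact Matrix.dotProduct_mulVec r A d
    have e1 : ∑ i, (r i - (A.mulVec d) i)^2
        = ∑ i, (r i)^2 - 2*(∑ j, b j * d j) + ∑ i, ((A.mulVec d) i)^2 := by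
      rw [aux_expand, hrd]
    have e2 : ∑ j, (d j - b j)^2
        = ∑ j, (d j)^2 - 2*(∑ j, d j * b j) + ∑ j, (b j)^2 := aux_expand d b
    have e3 : ∑ j, d j * b j = ∑ j, b j * d j :=
      Finset.sum_congr rfl fun j _ => mul_comm _ _
    rw [hG₀]
    simp only [hFdef, hCdef]
    rw [e1, e2, e3, hAnorm]
    ring
  have hFmin : ∀ d, F dtil ≤ F d := by
    intro d; have := hdtil d; rw [hGF, hGF] at this; linarith
  -- pen facts
  have hpen_smul : ∀ (s : ℝ), 0 ≤ s → ∀ x, pen (s • x) = s * pen x := by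
    intro s hs x
    rw [hpen, hpen, Finset.mul_sum]
    exact Finset.sum_congr rfl fun i _ => by
      simp [abs_mul, abs_of_nonneg hs]
  have hpen_conv : ∀ (t : ℝ) (x y : Fin K → ℝ), 0 ≤ t → t ≤ 1 →
      pen ((1-t) • x + t • y) ≤ (1-t) * pen x + t * pen y := by
    intro t x y ht0 ht1
    rw [hpen, hpen, hpen, Finset.mul_sum, Finset.mul_sum, ← Finset.sum_add_distrib]
    refine Finset.sum_le_sum fun i _ => ?_
    calc |((1-t) • x + t • y) i| = |(1-t) * x i + t * y i| := by simp
      _ ≤ |(1-t) * x i| + |t * y i| := abs_add_le _ _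
      _ = (1-t) * |x i| + t * |y i| := by
          rw [abs_mul, abs_mul, abs_of_nonneg ht0, abs_of_nonneg (by linarith)]
  obtain ⟨Q, hQdef⟩ : ∃ Q : ℝ, Q = ∑ j, (dtil j)^2 := ⟨_, rfl⟩
  have hQ0 : 0 ≤ Q := hQdef ▸ Finset.sum_nonneg fun j _ => sq_nonneg _
  obtain ⟨N, hNdef⟩ : ∃ N : ℝ, N = Real.sqrt Q := ⟨_, rfl⟩
  obtain ⟨c, hcdef⟩ : ∃ c : ℝ, c = max (1 - lam₂ / N) 0 := ⟨_, rfl⟩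
  have hc0 : 0 ≤ c := hcdef ▸ le_max_right _ _
  have hdhat' : dhat = c • dtil := by
    rw [hdhat, hAnorm dtil, ← hQdef, ← hNdef, ← hcdef]
  -- degenerate case Q = 0
  by_cases hQz : Q = 0
  · have hdt0 : dtil = 0 := by
      funext j
      have hz : ∑ j, (dtil j)^2 = 0 := by rw [← hQdef, hQz]
      have := (Finset.sum_eq_zero_iff_of_nonneg (fun j _ => sq_nonneg (dtil j))).1 hz j
        (Finset.mem_univ j)
      exact pow_eq_zero_iff (two_ne_zero) |>.1 this
    have hdh0 : dhat = 0 := by rw [hdhat', hdt0, smul_zero]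
    refine ⟨fun d => ?_, fun _ => hdh0⟩
    have h2 : Real.sqrt (∑ i, ((A.mulVec dhat) i)^2) = 0 := by
      rw [hdh0, Matrix.mulVec_zero]; simp
    have h3 : 0 ≤ lam₂ * Real.sqrt (∑ i, ((A.mulVec d) i)^2) :=
      mul_nonneg hlam₂ (Real.sqrt_nonneg _)
    have h4 : G₀ dhat ≤ G₀ d := by rw [hdh0, ← hdt0]; exact hdtil d
    rw [h2]; linarith
  -- main case Q > 0
  have hQpos : 0 < Q := lt_of_le_of_ne hQ0 (Ne.symm hQz)
  have hNpos : 0 < N := hNdef ▸ Real.sqrt_pos.2 hQpos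
  have hN2 : N^2 = Q := by rw [hNdef]; exact Real.sq_sqrt hQ0
  obtain ⟨M, hMdef⟩ : ∃ M : ℝ, M = (∑ j, b j * dtil j) - lam₁ * pen dtil := ⟨_, rfl⟩
  -- scaling identity for F along the ray through dtil
  have hFscale : ∀ s : ℝ, 0 ≤ s →
      F (s • dtil) = F dtil + ((1/2)*(s^2-1)*Q - (s-1)*M) := by
    intro s hs
    have e2 : ∑ j, ((s • dtil) j)^2 = s^2 * (∑ j, (dtil j)^2) := by
      rw [Finset.mul_sum]
      exact Finset.sum_congr rfl fun j _ => by simp [mul_pow]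
    have e3 : ∑ j, (s • dtil) j * b j = s * ∑ j, b j * dtil j := by
      rw [Finset.mul_sum]
      refine Finset.sum_congr rfl fun j _ => ?_
      simp only [Pi.smul_apply, smul_eq_mul]; ring
    have e1 : ∑ j, ((s • dtil) j - b j)^2
        = s^2 * Q - 2*s*(∑ j, b j * dtil j) + ∑ j, (b j)^2 := by
      rw [aux_expand, e2, e3, ← hQdef]; ring
    have e4 : ∑ j, (dtil j - b j)^2 = Q - 2*(∑ j, b j * dtil j) + ∑ j, (b j)^2 := by
      rw [aux_expand]
      have e5 : ∑ j, dtil j * b j = ∑ j, b j * dtil j :=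
        Finset.sum_congr rfl fun j _ => mul_comm _ _
      rw [e5, ← hQdef]
    simp only [hFdef]
    rw [e1, e4, hpen_smul s hs dtil, hMdef]
    ring
  -- minimality along the ray
  have hkey : ∀ s : ℝ, 0 ≤ s → 0 ≤ (1/2)*(s^2-1)*Q - (s-1)*M := by
    intro s hs
    have := hFmin (s • dtil)
    rw [hFscale s hs] at this
    linarith
  -- M = Q
  have hMQ : M = Q := by
    have h0 := hkey 0 le_rfl
    have hMhalf : Q/2 ≤ M := by nlinarith
    have hMpos : 0 < M := by linarith
    have hx := hkey (M/Q) (by positivity)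
    have e2 : M/Q * Q = M := div_mul_cancel₀ M (ne_of_gt hQpos)
    have e3 : (M/Q * Q) * (M/Q * Q) = M * M := by rw [e2]
    have hsq : (M - Q)^2 ≤ 0 := by nlinarith [mul_nonneg hx hQ0]
    have h5 := le_antisymm hsq (sq_nonneg _)
    have h6 := pow_eq_zero_iff two_ne_zero |>.1 h5
    linarith [sub_eq_zero.1 h6]
  have hFdhat : F (c • dtil) = F dtil + (1/2)*(c-1)^2*Q := by
    rw [hFscale c hc0, hMQ]; ring
  -- strong convexity step
  have hstep : ∀ (d : Fin K → ℝ) (t : ℝ), 0 < t → t ≤ 1 →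
      F dtil + (1/2)*(1-t)*(∑ j, (d j - dtil j)^2) ≤ F d := by
    intro d t ht0 ht1
    obtain ⟨S1, hS1⟩ : ∃ S : ℝ, S = ∑ j, (dtil j - b j)^2 := ⟨_, rfl⟩
    obtain ⟨S2, hS2⟩ : ∃ S : ℝ, S = ∑ j, (d j - b j)^2 := ⟨_, rfl⟩
    obtain ⟨S3, hS3⟩ : ∃ S : ℝ, S = ∑ j, (d j - dtil j)^2 := ⟨_, rfl⟩
    have hS30 : 0 ≤ S3 := hS3 ▸ Finset.sum_nonneg fun j _ => sq_nonneg _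
    obtain ⟨m, hmdef⟩ : ∃ m : Fin K → ℝ, m = (1-t) • dtil + t • d := ⟨_, rfl⟩
    have hpt : ∀ j ∈ Finset.univ, (m j - b j)^2
        = (1-t)*(dtil j - b j)^2 + t*(d j - b j)^2 - t*(1-t)*(d j - dtil j)^2 := by
      intro j _
      have hm : m j = (1-t) * dtil j + t * d j := by rw [hmdef]; simp
      rw [hm]; ring
    have hq : ∑ j, (m j - b j)^2 = (1-t) * S1 + t * S2 - t*(1-t) * S3 := by
      rw [hS1, hS2, hS3, Finset.sum_congr rfl hpt, Finset.sum_sub_distrib,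
        Finset.sum_add_distrib, ← Finset.mul_sum, ← Finset.mul_sum, ← Finset.mul_sum]
    have hpc : pen m ≤ (1-t) * pen dtil + t * pen d := by
      rw [hmdef]; exact hpen_conv t dtil d ht0.le ht1
    have hlp := mul_le_mul_of_nonneg_left hpc hlam₁
    have hFm : F m ≤ (1-t) * F dtil + t * F d - (1/2)*(t*(1-t))*S3 := by
      simp only [hFdef]
      rw [hq, ← hS1, ← hS2]
      nlinarith [hlp]
    have hFm2 := hFmin m
    have h5 : t * (F dtil + (1/2)*(1-t)*S3) ≤ t * F d := by nlinarith [hFm, hFm2]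
    have h6 := le_of_mul_le_mul_left h5 ht0
    rw [hS3] at h6
    exact h6
  have hstrong : ∀ d : Fin K → ℝ,
      F dtil + (1/2)*(∑ j, (d j - dtil j)^2) ≤ F d := by
    intro d
    obtain ⟨W, hWdef⟩ : ∃ W : ℝ, W = ∑ j, (d j - dtil j)^2 := ⟨_, rfl⟩
    rw [← hWdef]
    have hW0 : 0 ≤ W := hWdef ▸ Finset.sum_nonneg fun j _ => sq_nonneg _
    by_contra hcon
    push_neg at hcon
    have hWpos : 0 < W := by
      rcases hW0.lt_or_eq with h | h
      · exact h
      · exfalso; have := hFmin d; rw [← h] at hcon; linarith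
    obtain ⟨ε, hεdef⟩ : ∃ e : ℝ, e = F dtil + (1/2)*W - F d := ⟨_, rfl⟩
    have hε : 0 < ε := by rw [hεdef]; linarith
    obtain ⟨t, htdef⟩ : ∃ t : ℝ, t = min 1 (ε / W) := ⟨_, rfl⟩
    have ht0 : 0 < t := htdef ▸ lt_min one_pos (div_pos hε hWpos)
    have ht1 : t ≤ 1 := htdef ▸ min_le_left _ _
    have h6 := hstep d t ht0 ht1
    rw [← hWdef] at h6
    have htW : t * W ≤ ε := by
      calc t * W ≤ (ε / W) * W := by
            exact mul_le_mul_of_nonneg_right (htdef ▸ min_le_right _ _) hW0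
        _ = ε := div_mul_cancel₀ _ (ne_of_gt hWpos)
    nlinarith [h6, htW, hε, hεdef]
  -- prox step
  have hprox : ∀ d : Fin K → ℝ,
      (1/2)*(c-1)^2*Q + lam₂ * (c * N)
        ≤ (1/2)*(∑ j, (d j - dtil j)^2) + lam₂ * Real.sqrt (∑ j, (d j)^2) := by
    intro d
    obtain ⟨u, hudef⟩ : ∃ u : ℝ, u = Real.sqrt (∑ j, (d j)^2) := ⟨_, rfl⟩
    rw [← hudef]
    have hu0 : 0 ≤ u := hudef ▸ Real.sqrt_nonneg _
    have hu2 : u^2 = ∑ j, (d j)^2 := by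
      rw [hudef]; exact Real.sq_sqrt (Finset.sum_nonneg fun j _ => sq_nonneg _)
    have hcs : ∑ j, d j * dtil j ≤ u * N := by
      rw [hudef, hNdef, hQdef]; exact aux_cs d dtil
    have hlow : u^2 - 2*(u*N) + N^2 ≤ ∑ j, (d j - dtil j)^2 := by
      rw [aux_expand, hu2, hN2, ← hQdef]; linarith
    have hgoal : (1/2)*(c-1)^2*Q + lam₂ * (c * N)
        ≤ (1/2)*(u^2 - 2*(u*N) + N^2) + lam₂ * u := by
      rcases le_or_gt lam₂ N with hl | hl
      · have hcval : c = 1 - lam₂ / N := by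
          rw [hcdef]
          exact max_eq_left (sub_nonneg.2 ((div_le_one hNpos).2 hl))
        have hc1 : (c - 1) * N = -lam₂ := by
          rw [hcval]; field_simp; ring
        have hc2 : c * N = N - lam₂ := by
          rw [hcval]; field_simp
        have hq1 : (c-1)^2 * Q = lam₂^2 := by
          rw [← hN2]; nlinarith [hc1]
        nlinarith [sq_nonneg (u - N + lam₂), hq1, hc2]
      · have hcval : c = 0 := by
          rw [hcdef]
          refine max_eq_right ?_
          have : 1 < lam₂ / N := (one_lt_div hNpos).2 hl
          linarith
        rw [hcval, ← hN2]
        nlinarith [mul_nonneg hu0 (sub_nonneg.2 hl.le), sq_nonneg u]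
    linarith
  constructor
  · intro d
    have hsq_dhat : Real.sqrt (∑ j, (dhat j)^2) = c * N := by
      rw [hdhat']
      have e1 : ∑ j, ((c • dtil) j)^2 = c^2 * (∑ j, (dtil j)^2) := by
        rw [Finset.mul_sum]
        exact Finset.sum_congr rfl fun j _ => by simp [mul_pow]
      rw [e1, ← hQdef, Real.sqrt_mul (sq_nonneg c), Real.sqrt_sq hc0, hNdef]
    calc G₀ dhat + lam₂ * Real.sqrt (∑ i, ((A.mulVec dhat) i)^2)
        = C + F (c • dtil) + lam₂ * (c * N) := by
          rw [hGF, hAnorm dhat, hsq_dhat, hdhat']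
      _ = C + F dtil + ((1/2)*(c-1)^2*Q + lam₂ * (c * N)) := by rw [hFdhat]; ring
      _ ≤ C + F dtil + ((1/2)*(∑ j, (d j - dtil j)^2)
            + lam₂ * Real.sqrt (∑ j, (d j)^2)) := by linarith [hprox d]
      _ ≤ C + F d + lam₂ * Real.sqrt (∑ j, (d j)^2) := by linarith [hstrong d]
      _ = G₀ d + lam₂ * Real.sqrt (∑ i, ((A.mulVec d) i)^2) := by
          rw [hGF, hAnorm d]
  · intro h
    exfalso
    apply hQz
    rw [hQdef, ← hAnorm dtil, h]
    simp
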